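/- Let G be a finite abelian group, let I be a finite index set, and for each α ∈ I let B_α ⊆ G satisfy |B_α| ≤ ε·|G| for some real ε ∈ (0,1). Let m be a natural number divisible by 3, and suppose |I| · |G| · 2^m · ε^(m/3) < 1. Then there exist r_1, ..., r_m ∈ G such that for every α ∈ I and every u ∈ G, the number of indices i ∈ {1,...,m} with r_i + u ∈ B_α is less than m/3. -/

import Mathlib

open Finset

private lemma choose_le_two_pow' (m k : ℕ) : m.choose k ≤ 2 ^ m := by
  rcases le_or_gt k m with h | h
  · calc m.choose k ≤ ∑ i ∈ Finset.range (m + 1), m.choose i :=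
          Finset.single_le_sum (fun _ _ => Nat.zero_le _) (Finset.mem_range.mpr (by omega))
      _ = 2 ^ m := Nat.sum_range_choose m
  · rw [Nat.choose_eq_zero_of_lt h]; positivity

/-- Lautemann-style XOR trick: if each bad set `B_α` has density at most `ε` and
`|I| · |G| · 2^m · ε^(m/3) < 1`, then there are shifts `r_1, …, r_m` such that for
every `α` and every `u`, fewer than `m/3` of the shifted points `r_i + u` land in
`B_α`. -/
theorem xor_trick_shifts (G : Type*) [AddCommGroup G] [Fintype G] [DecidableEq G]
    (I : Type*) [Fintype I] (B : I → Finset G) (ε : ℝ)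
    (hε0 : 0 < ε) (hε1 : ε < 1)
    (hB : ∀ α : I, ((B α).card : ℝ) ≤ ε * Fintype.card G)
    (m : ℕ) (hm3 : 3 ∣ m)
    (hsmall : (Fintype.card I : ℝ) * (Fintype.card G) * 2 ^ m * ε ^ (m / 3) < 1) :
    ∃ r : Fin m → G, ∀ α : I, ∀ u : G,
      3 * (Finset.univ.filter (fun i : Fin m => r i + u ∈ B α)).card < m := by
  classical
  obtain ⟨k, hk⟩ := hm3
  have hkm : k ≤ m := by omega
  have hmk : m / 3 = k := by omega
  set Gc := Fintype.card G with hGc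
  have hGc0 : 0 < Gc := Fintype.card_pos
  set Bad : Finset (Fin m → G) :=
    univ.filter (fun r => ∃ α u,
      m ≤ 3 * (univ.filter (fun i : Fin m => r i + u ∈ B α)).card) with hBad
  -- the pi-set corresponding to (α, u, S)
  set P : I → G → Finset (Fin m) → Finset (Fin m → G) := fun α u S =>
    Fintype.piFinset (fun i => if i ∈ S then (B α).image (fun b => b - u)
      else (univ : Finset G)) with hP
  have keycard : ∀ α u (S : Finset (Fin m)), S.card = k →
      (P α u S).card = (B α).card ^ k * Gc ^ (m - k) := by
    intro α u S hS
    rw [hP, Fintype.card_piFinset]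
    have h1 : ∀ i : Fin m,
        (if i ∈ S then (B α).image (fun b => b - u) else (univ : Finset G)).card
          = if i ∈ S then (B α).card else Gc := by
      intro i; split
      · exact Finset.card_image_of_injective _ sub_left_injective
      · simp [hGc]
    simp_rw [h1]
    rw [Finset.prod_ite, Finset.prod_const, Finset.prod_const]
    have h2 : (univ : Finset (Fin m)).filter (· ∈ S) = S := by
      ext i; simp
    have h3 : ((univ : Finset (Fin m)).filter (¬ · ∈ S)).card = m - k := by
      rw [Finset.filter_not, h2]
      simp [Finset.card_sdiff_of_subset (Finset.subset_univ S), hS]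
    rw [h2, hS, h3]
  have hsub : Bad ⊆ (univ : Finset I).biUnion (fun α => (univ : Finset G).biUnion
      (fun u => ((univ : Finset (Fin m)).powersetCard k).biUnion (fun S => P α u S))) := by
    intro r hr
    rw [hBad, Finset.mem_filter] at hr
    obtain ⟨-, α, u, hmu⟩ := hr
    have hkc : k ≤ (univ.filter (fun i : Fin m => r i + u ∈ B α)).card := by omega
    obtain ⟨S, hSsub, hScard⟩ := Finset.exists_subset_card_eq hkc
    refine Finset.mem_biUnion.mpr ⟨α, Finset.mem_univ _, Finset.mem_biUnion.mpr
      ⟨u, Finset.mem_univ _, Finset.mem_biUnion.mpr ⟨S, ?_, ?_⟩⟩⟩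
    · exact Finset.mem_powersetCard_univ.mpr hScard
    · rw [hP, Fintype.mem_piFinset]
      intro i
      by_cases hi : i ∈ S
      · simp only [hi, if_true]
        have := hSsub hi
        rw [Finset.mem_filter] at this
        exact Finset.mem_image.mpr ⟨r i + u, this.2, by abel⟩
      · simp [hi]
    -- natural-number counting bound
  have hcount : Bad.card ≤ ∑ α : I, ∑ u : G, ∑ S ∈ (univ : Finset (Fin m)).powersetCard k,
      (B α).card ^ k * Gc ^ (m - k) := by
    refine le_trans (Finset.card_le_card hsub) ?_
    refine le_trans (Finset.card_biUnion_le) (Finset.sum_le_sum fun α _ => ?_)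
    refine le_trans (Finset.card_biUnion_le) (Finset.sum_le_sum fun u _ => ?_)
    refine le_trans (Finset.card_biUnion_le) (Finset.sum_le_sum fun S hS => ?_)
    rw [keycard α u S (Finset.mem_powersetCard_univ.mp hS)]
  -- pass to the reals
  have hreal : (Bad.card : ℝ) < (Gc : ℝ) ^ m := by
    have hGpow : (0:ℝ) < (Gc : ℝ) ^ m := by positivity
    calc (Bad.card : ℝ)
        ≤ ∑ α : I, ∑ u : G, ∑ S ∈ (univ : Finset (Fin m)).powersetCard k,
            ((B α).card : ℝ) ^ k * (Gc : ℝ) ^ (m - k) := by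
          exact_mod_cast Nat.cast_le.mpr hcount
      _ ≤ ∑ α : I, ∑ u : G, ∑ S ∈ (univ : Finset (Fin m)).powersetCard k,
            (ε * Gc) ^ k * (Gc : ℝ) ^ (m - k) := by
          refine Finset.sum_le_sum fun α _ => Finset.sum_le_sum fun u _ =>
            Finset.sum_le_sum fun S _ => ?_
          have := pow_le_pow_left₀ (by positivity) (hB α) k
          exact mul_le_mul_of_nonneg_right this (by positivity)
      _ = (Fintype.card I : ℝ) * Gc * (m.choose k) * (ε ^ k * (Gc : ℝ) ^ m) := by
          rw [Finset.sum_const, Finset.sum_const, Finset.sum_const]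
          simp only [Finset.card_powersetCard, Finset.card_univ, Fintype.card_fin,
            smul_eq_mul, mul_pow]
          rw [mul_assoc (ε ^ k), ← pow_add, Nat.add_sub_cancel' hkm]
          ring
      _ ≤ (Fintype.card I : ℝ) * Gc * (2 ^ m) * (ε ^ k * (Gc : ℝ) ^ m) := by
          refine mul_le_mul_of_nonneg_right (mul_le_mul_of_nonneg_left ?_ (by positivity))
            (by positivity)
          exact_mod_cast Nat.cast_le.mpr (choose_le_two_pow' m k)
      _ = ((Fintype.card I : ℝ) * Gc * 2 ^ m * ε ^ (m / 3)) * (Gc : ℝ) ^ m := by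
          rw [hmk]; ring
      _ < 1 * (Gc : ℝ) ^ m := by
          exact mul_lt_mul_of_pos_right hsmall hGpow
      _ = (Gc : ℝ) ^ m := one_mul _
  have hnat : Bad.card < Gc ^ m := by exact_mod_cast hreal
  obtain ⟨r, hr⟩ : ∃ r : Fin m → G, r ∉ Bad := by
    by_contra h
    push_neg at h
    have : (univ : Finset (Fin m → G)).card ≤ Bad.card :=
      Finset.card_le_card (fun r _ => h r)
    rw [Finset.card_univ, Fintype.card_fun, Fintype.card_fin, ← hGc] at this
    omega
  refine ⟨r, fun α u => ?_⟩
  rw [hBad, Finset.mem_filter] at hr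
  push_neg at hr
  exact hr (Finset.mem_univ r) α u
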